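/- The GNO semantics is correctly captured by the program transformation t: if S is a GNO-preferred answer set of (P,<), then A = S ∪ {n_r : r ∈ Γ_S(P)} ∪ Aux(S) is an answer set of t(P,<); conversely, if A is an answer set of t(P,<), then S = A ∩ Lit is a GNO-preferred answer set of (P,<) and A = S ∪ {n_r : r ∈ Γ_S(P)} ∪ Aux(S). -/

import Mathlib

/-- A literal over atoms `A`: `(true, a)` is the atom `a`, `(false, a)` is `¬ a`. -/
abbrev Lit (A : Type) := Bool × A

/-- A rule with head, positive body and negative body. -/
structure Rule (A : Type) where
  head : Lit A
  pos : Set (Lit A)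
  neg : Set (Lit A)

variable {A : Type}

/-- Heads of a set of rules. -/
def headSet (R : Set (Rule A)) : Set (Lit A) := Rule.head '' R

/-- `R ⊆ P` positively satisfies `P`. -/
def PosSat (P R : Set (Rule A)) : Prop :=
  R ⊆ P ∧ ∀ r ∈ P, r.pos ⊆ headSet R → r ∈ R

/-- The minimal set of rules positively satisfying `P`. -/
def MP (P : Set (Rule A)) : Set (Rule A) := ⋂₀ {R | PosSat P R}

/-- A set of rules defeats a rule. -/
def defeatsRule (R : Set (Rule A)) (r : Rule A) : Prop :=
  (headSet R ∩ r.neg).Nonempty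

/-- A set of rules defeats a set of rules. -/
def defeatsSet (R₁ R₂ : Set (Rule A)) : Prop := ∃ r ∈ R₂, defeatsRule R₁ r

/-- The reduct `P^R` removes each rule defeated by `R`. -/
def reduct (P R : Set (Rule A)) : Set (Rule A) := {r ∈ P | ¬ defeatsRule R r}

/-- `R ⊆ P` is a generating set of `P` iff `R = MP (P^R)`. -/
def GenSet (P R : Set (Rule A)) : Prop := R ⊆ P ∧ R = MP (reduct P R)

/-- A set of literals is consistent iff it contains no complementary pair. -/
def Consistent (S : Set (Lit A)) : Prop :=
  ∀ a : A, ¬ (((true, a) ∈ S) ∧ ((false, a) ∈ S))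

/-- Answer sets via generating sets. -/
def AnswerSet (P : Set (Rule A)) (S : Set (Lit A)) : Prop :=
  Consistent S ∧ ∃ R, GenSet P R ∧ headSet R = S

/-- `Γ_S(P)`: rules whose positive body is in `S` and negative body disjoint from `S`. -/
def Gamma (S : Set (Lit A)) (P : Set (Rule A)) : Set (Rule A) :=
  {r ∈ P | r.pos ⊆ S ∧ r.neg ∩ S = ∅}

/-- Fragments of a program. -/
def Frag (P : Set (Rule A)) : Set (Set (Rule A)) := {R | R ⊆ P ∧ MP R = R}

/-- Fragment reduct: remove fragments defeated by a member of `E`. -/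
def fragReduct (P : Set (Rule A)) (E : Set (Set (Rule A))) : Set (Set (Rule A)) :=
  {X ∈ Frag P | ¬ ∃ Y ∈ E, defeatsSet Y X}

/-- Stable fragment sets. -/
def StableFragSet (P : Set (Rule A)) (E : Set (Set (Rule A))) : Prop :=
  E ⊆ Frag P ∧ fragReduct P E = E

/-- Mutually defeating (conflicting) sets of rules. -/
def Conflicting (X Y : Set (Rule A)) : Prop := defeatsSet X Y ∧ defeatsSet Y X

/-- `X` overrides `Y` w.r.t. the preference relation `lt`. -/
def Overrides (lt : Rule A → Rule A → Prop) (X Y : Set (Rule A)) : Prop :=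
  Conflicting X Y ∧
    ∀ r₁ ∈ X, defeatsRule Y r₁ → ∃ r₂ ∈ Y, defeatsRule X r₂ ∧ lt r₂ r₁

/-- Preferred fragment reduct (semantics G). -/
def prefFragReduct (lt : Rule A → Rule A → Prop) (P : Set (Rule A))
    (E : Set (Set (Rule A))) : Set (Set (Rule A)) :=
  {X ∈ Frag P | ¬ ∃ Y ∈ E, defeatsSet Y X ∧ ¬ Overrides lt X Y}

/-- Preferred stable fragment sets (semantics G). -/
def PrefStableFragSet (lt : Rule A → Rule A → Prop) (P : Set (Rule A))
    (E : Set (Set (Rule A))) : Prop :=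
  E ⊆ Frag P ∧ prefFragReduct lt P E = E

/-- Preferred answer sets under the fragment-based semantics G. -/
def GPrefAnswerSet (lt : Rule A → Rule A → Prop) (P : Set (Rule A))
    (S : Set (Lit A)) : Prop :=
  Consistent S ∧ ∃ E, PrefStableFragSet lt P E ∧ headSet (⋃₀ E) = S

/-- `T(r,R)` for semantics GNO. -/
def Trules (lt : Rule A → Rule A → Prop) (r : Rule A) (R : Set (Rule A)) :
    Set (Rule A) :=
  MP {p ∈ R | ¬ lt p r}

/-- GNO reduct: remove rules `r` with `body⁻(r) ∩ head(T(r,R)) ≠ ∅`. -/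
def gnoReduct (lt : Rule A → Rule A → Prop) (P R : Set (Rule A)) : Set (Rule A) :=
  {r ∈ P | ¬ (r.neg ∩ headSet (Trules lt r R)).Nonempty}

/-- GNO-preferred generating sets. -/
def GNOPrefGen (lt : Rule A → Rule A → Prop) (P R : Set (Rule A)) : Prop :=
  GenSet P R ∧ R = MP (gnoReduct lt P R)

/-- GNO-preferred answer sets. -/
def GNOPrefAnswerSet (lt : Rule A → Rule A → Prop) (P : Set (Rule A))
    (S : Set (Lit A)) : Prop :=
  Consistent S ∧ ∃ R, GNOPrefGen lt P R ∧ headSet R = S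

/-- A rule defeats a rule. -/
def defeats (r₁ r₂ : Rule A) : Prop := r₁.head ∈ r₂.neg

/-- `r₁` directly overrides `r₂` w.r.t. `lt`. -/
def DirOverrides (lt : Rule A → Rule A → Prop) (r₁ r₂ : Rule A) : Prop :=
  (defeats r₁ r₂ ∧ defeats r₂ r₁) ∧ lt r₂ r₁

/-- D-reduct for the direct-conflict semantics. -/
def dReduct (lt : Rule A → Rule A → Prop) (P R : Set (Rule A)) : Set (Rule A) :=
  {r₁ ∈ P | ¬ ∃ r₂ ∈ R, defeats r₂ r₁ ∧ ¬ DirOverrides lt r₁ r₂}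

/-- D-preferred generating sets. -/
def DPrefGen (lt : Rule A → Rule A → Prop) (P R : Set (Rule A)) : Prop :=
  R = MP (dReduct lt P R)

/-- D-preferred answer sets. -/
def DPrefAnswerSet (lt : Rule A → Rule A → Prop) (P : Set (Rule A))
    (S : Set (Lit A)) : Prop :=
  Consistent S ∧ ∃ R, DPrefGen lt P R ∧ headSet R = S

/-- Stratified programs. -/
def Stratified (P : Set (Rule A)) : Prop :=
  ∃ lam : Lit A → ℕ, ∀ r ∈ P,
    (∀ l ∈ r.pos, lam l ≤ lam r.head) ∧ (∀ l ∈ r.neg, lam l < lam r.head)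

/-- Atoms of the transformed program: original atoms, a name `n_r` for each rule
`r`, a tagged copy `x^r` of each literal `x` for each rule `r`, and `inc`. -/
inductive TAtom (A : Type) where
  | orig : A → TAtom A
  | name : Rule A → TAtom A
  | tag  : Lit A → Rule A → TAtom A
  | inc  : TAtom A

/-- Embedding of the original literals. -/
def embedLit {A : Type} (l : Lit A) : Lit (TAtom A) := (l.1, TAtom.orig l.2)

/-- The literal `n_r`. -/
def nLit {A : Type} (r : Rule A) : Lit (TAtom A) := (true, TAtom.name r)

/-- The literal `x^r`. -/
def tagLit {A : Type} (x : Lit A) (r : Rule A) : Lit (TAtom A) := (true, TAtom.tag x r)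

/-- The literal `inc`. -/
def incLit {A : Type} : Lit (TAtom A) := (true, TAtom.inc)

/-- The transformation `t(P,<)`. -/
def transProg {A : Type} (lt : Rule A → Rule A → Prop) (P : Set (Rule A)) :
    Set (Rule (TAtom A)) :=
  {q | ∃ r ∈ P,
    -- (1)  head(r) ← n_r
    q = ⟨embedLit r.head, {nLit r}, ∅⟩ ∨
    -- (2)  n_r ← body⁺(r), not body⁻(r)^r
    q = ⟨nLit r, embedLit '' r.pos, (fun x => tagLit x r) '' r.neg⟩ ∨
    -- (3)  head(p)^r ← body⁺(p)^r, n_p   for each p ∈ P with ¬ (p < r)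
    (∃ p ∈ P, ¬ lt p r ∧
      q = ⟨tagLit p.head r, (fun y => tagLit y r) '' p.pos ∪ {nLit p}, ∅⟩) ∨
    -- (4)  inc ← n_r, x, not inc   for each x ∈ body⁻(r)
    (∃ x ∈ r.neg, q = ⟨incLit, {nLit r, embedLit x}, {incLit}⟩)}

/-- The literals `n_r` for `r ∈ Γ_S(P)`. -/
def nameLits {A : Type} (P : Set (Rule A)) (S : Set (Lit A)) : Set (Lit (TAtom A)) :=
  nLit '' Gamma S P

/-- `Aux(S) = ⋃_{r ∈ P} head(T(r, Γ_S(P)))^r`. -/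
def auxLits {A : Type} (lt : Rule A → Rule A → Prop) (P : Set (Rule A))
    (S : Set (Lit A)) : Set (Lit (TAtom A)) :=
  {l | ∃ r ∈ P, ∃ x ∈ headSet (Trules lt r (Gamma S P)), l = tagLit x r}


section GnoHelpers

lemma posSat_self (P : Set (Rule A)) : PosSat P P := ⟨subset_rfl, fun r hr _ => hr⟩

lemma MP_le {P R : Set (Rule A)} (h : PosSat P R) : MP P ⊆ R :=
  Set.sInter_subset_of_mem h

lemma MP_subset (P : Set (Rule A)) : MP P ⊆ P := MP_le (posSat_self P)

lemma headSet_mono {R R' : Set (Rule A)} (h : R ⊆ R') : headSet R ⊆ headSet R' :=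
  Set.image_mono h

lemma mem_headSet {R : Set (Rule A)} {l : Lit A} :
    l ∈ headSet R ↔ ∃ r ∈ R, r.head = l := by
  simp [headSet, Set.mem_image]

lemma head_mem_headSet {R : Set (Rule A)} {r : Rule A} (h : r ∈ R) :
    r.head ∈ headSet R := ⟨r, h, rfl⟩

lemma posSat_MP (P : Set (Rule A)) : PosSat P (MP P) := by
  refine ⟨MP_subset P, fun r hr hpos => ?_⟩
  simp only [MP, Set.mem_sInter, Set.mem_setOf_eq]
  intro X hX
  exact hX.2 r hr (hpos.trans (headSet_mono (MP_le hX)))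

lemma MP_closed {P : Set (Rule A)} {r : Rule A} (hr : r ∈ P)
    (h : r.pos ⊆ headSet (MP P)) : r ∈ MP P := (posSat_MP P).2 r hr h

lemma MP_pos {P : Set (Rule A)} {r : Rule A} (hr : r ∈ MP P) :
    r.pos ⊆ headSet (MP P) := by
  have hsub : {x ∈ MP P | x.pos ⊆ headSet (MP P)} ⊆ MP P := Set.sep_subset _ _
  have h : PosSat P {x ∈ MP P | x.pos ⊆ headSet (MP P)} := by
    refine ⟨fun x hx => MP_subset P hx.1, fun x hx hpos => ?_⟩
    have hp : x.pos ⊆ headSet (MP P) := hpos.trans (headSet_mono hsub)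
    exact ⟨MP_closed hx hp, hp⟩
  exact (MP_le h hr).2

lemma genSet_eq_gamma {P R : Set (Rule A)} (h : GenSet P R) :
    R = Gamma (headSet R) P := by
  obtain ⟨hRP, hR⟩ := h
  apply Set.Subset.antisymm
  · intro r hr
    have hr' : r ∈ MP (reduct P R) := hR ▸ hr
    have hred : r ∈ reduct P R := MP_subset _ hr'
    refine ⟨hred.1, ?_, ?_⟩
    · have := MP_pos hr'
      rwa [← hR] at this
    · have hnd : ¬ defeatsRule R r := hred.2
      rw [Set.eq_empty_iff_forall_notMem]
      intro x ⟨hx1, hx2⟩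
      exact hnd ⟨x, hx2, hx1⟩
  · intro r hr
    obtain ⟨hrP, hpos, hneg⟩ := hr
    have hred : r ∈ reduct P R := by
      refine ⟨hrP, fun ⟨x, hx1, hx2⟩ => ?_⟩
      rw [Set.eq_empty_iff_forall_notMem] at hneg
      exact hneg x ⟨hx2, hx1⟩
    have : r ∈ MP (reduct P R) := MP_closed hred (by rw [← hR]; exact hpos)
    rwa [← hR] at this

/-- Rule form (1). -/
def rule1 (r : Rule A) : Rule (TAtom A) := ⟨embedLit r.head, {nLit r}, ∅⟩
/-- Rule form (2). -/
def rule2 (r : Rule A) : Rule (TAtom A) :=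
  ⟨nLit r, embedLit '' r.pos, (fun x => tagLit x r) '' r.neg⟩
/-- Rule form (3). -/
def rule3 (p r : Rule A) : Rule (TAtom A) :=
  ⟨tagLit p.head r, (fun y => tagLit y r) '' p.pos ∪ {nLit p}, ∅⟩
/-- Rule form (4). -/
def rule4 (r : Rule A) (x : Lit A) : Rule (TAtom A) := ⟨incLit, {nLit r, embedLit x}, {incLit}⟩

lemma mem_transProg {lt : Rule A → Rule A → Prop} {P : Set (Rule A)} {q : Rule (TAtom A)} :
    q ∈ transProg lt P ↔ ∃ r ∈ P, q = rule1 r ∨ q = rule2 r ∨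
      (∃ p ∈ P, ¬ lt p r ∧ q = rule3 p r) ∨ (∃ x ∈ r.neg, q = rule4 r x) := Iff.rfl

lemma nLit_inj {r r' : Rule A} (h : nLit r = nLit r') : r = r' := by
  simpa [nLit, Prod.ext_iff] using h

lemma tagLit_inj {x x' : Lit A} {r r' : Rule A} (h : tagLit x r = tagLit x' r') :
    x = x' ∧ r = r' := by
  simpa [tagLit, Prod.ext_iff] using h

lemma embedLit_inj {x y : Lit A} (h : embedLit x = embedLit y) : x = y := by
  obtain ⟨x1, x2⟩ := x; obtain ⟨y1, y2⟩ := y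
  simpa [embedLit, Prod.ext_iff] using h

lemma rule1_inj {r r' : Rule A} (h : rule1 r = rule1 r') : r = r' := by
  have := congrArg Rule.pos h
  simp only [rule1, Set.singleton_eq_singleton_iff] at this
  exact nLit_inj this

lemma rule3_inj {p p' r r' : Rule A} (h : rule3 p r = rule3 p' r') :
    p = p' ∧ r = r' := by
  have hh := congrArg Rule.head h
  simp only [rule3] at hh
  have hr : r = r' := (tagLit_inj hh).2
  have hp := congrArg Rule.pos h
  simp only [rule3] at hp
  have hnp : nLit p ∈ (fun y => tagLit y r') '' p'.pos ∪ {nLit p'} := by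
    rw [← hp]; exact Set.mem_union_right _ rfl
  rcases hnp with hnp | hnp
  · obtain ⟨y, _, hy⟩ := hnp
    exact absurd hy (by simp [nLit, tagLit])
  · exact ⟨nLit_inj hnp, hr⟩


lemma rule1_mem {lt : Rule A → Rule A → Prop} {P : Set (Rule A)} {r : Rule A}
    (hr : r ∈ P) : rule1 r ∈ transProg lt P := ⟨r, hr, Or.inl rfl⟩

lemma rule2_mem {lt : Rule A → Rule A → Prop} {P : Set (Rule A)} {r : Rule A}
    (hr : r ∈ P) : rule2 r ∈ transProg lt P := ⟨r, hr, Or.inr (Or.inl rfl)⟩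

lemma rule3_mem {lt : Rule A → Rule A → Prop} {P : Set (Rule A)} {p r : Rule A}
    (hr : r ∈ P) (hp : p ∈ P) (hlt : ¬ lt p r) : rule3 p r ∈ transProg lt P :=
  ⟨r, hr, Or.inr (Or.inr (Or.inl ⟨p, hp, hlt, rfl⟩))⟩

lemma rule4_mem {lt : Rule A → Rule A → Prop} {P : Set (Rule A)} {r : Rule A} {x : Lit A}
    (hr : r ∈ P) (hx : x ∈ r.neg) : rule4 r x ∈ transProg lt P :=
  ⟨r, hr, Or.inr (Or.inr (Or.inr ⟨x, hx, rfl⟩))⟩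

lemma decode_name {lt : Rule A → Rule A → Prop} {P : Set (Rule A)} {q : Rule (TAtom A)}
    {r : Rule A} (hq : q ∈ transProg lt P) (hh : q.head = nLit r) :
    r ∈ P ∧ q = rule2 r := by
  obtain ⟨r₀, hr₀, hc⟩ := hq
  rcases hc with h | h | ⟨p, hp, hlt, h⟩ | ⟨x, hx, h⟩
  · subst h; exact absurd hh (by simp [rule1, embedLit, nLit, Prod.ext_iff])
  · subst h
    have : r₀ = r := nLit_inj (by simpa [rule2] using hh)
    subst this; exact ⟨hr₀, rfl⟩
  · subst h; exact absurd hh (by simp [rule3, tagLit, nLit, Prod.ext_iff])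
  · subst h; exact absurd hh (by simp [rule4, incLit, nLit, Prod.ext_iff])

lemma decode_embed {lt : Rule A → Rule A → Prop} {P : Set (Rule A)} {q : Rule (TAtom A)}
    {x : Lit A} (hq : q ∈ transProg lt P) (hh : q.head = embedLit x) :
    ∃ r ∈ P, r.head = x ∧ q = rule1 r := by
  obtain ⟨r₀, hr₀, hc⟩ := hq
  rcases hc with h | h | ⟨p, hp, hlt, h⟩ | ⟨y, hy, h⟩
  · subst h
    exact ⟨r₀, hr₀, embedLit_inj (by simpa [rule1] using hh), rfl⟩
  · subst h; exact absurd hh (by simp [rule2, embedLit, nLit, Prod.ext_iff])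
  · subst h; exact absurd hh (by simp [rule3, embedLit, tagLit, Prod.ext_iff])
  · subst h; exact absurd hh (by simp [rule4, embedLit, incLit, Prod.ext_iff])

lemma decode_tag {lt : Rule A → Rule A → Prop} {P : Set (Rule A)} {q : Rule (TAtom A)}
    {x : Lit A} {r : Rule A} (hq : q ∈ transProg lt P) (hh : q.head = tagLit x r) :
    r ∈ P ∧ ∃ p ∈ P, ¬ lt p r ∧ p.head = x ∧ q = rule3 p r := by
  obtain ⟨r₀, hr₀, hc⟩ := hq
  rcases hc with h | h | ⟨p, hp, hlt, h⟩ | ⟨y, hy, h⟩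
  · subst h; exact absurd hh (by simp [rule1, embedLit, tagLit, Prod.ext_iff])
  · subst h; exact absurd hh (by simp [rule2, nLit, tagLit, Prod.ext_iff])
  · subst h
    obtain ⟨hx, hr⟩ := tagLit_inj (by simpa [rule3] using hh)
    subst hr
    exact ⟨hr₀, p, hp, hlt, hx, rfl⟩
  · subst h; exact absurd hh (by simp [rule4, incLit, tagLit, Prod.ext_iff])

lemma decode_inc {lt : Rule A → Rule A → Prop} {P : Set (Rule A)} {q : Rule (TAtom A)}
    (hq : q ∈ transProg lt P) (hh : q.head = incLit) :
    ∃ r ∈ P, ∃ x ∈ r.neg, q = rule4 r x := by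
  obtain ⟨r₀, hr₀, hc⟩ := hq
  rcases hc with h | h | ⟨p, hp, hlt, h⟩ | ⟨y, hy, h⟩
  · subst h; exact absurd hh (by simp [rule1, embedLit, incLit, Prod.ext_iff])
  · subst h; exact absurd hh (by simp [rule2, nLit, incLit, Prod.ext_iff])
  · subst h; exact absurd hh (by simp [rule3, tagLit, incLit, Prod.ext_iff])
  · subst h; exact ⟨r₀, hr₀, y, hy, rfl⟩

lemma mem_reduct_iff {B : Type} {Q G : Set (Rule B)} {q : Rule B} :
    q ∈ reduct Q G ↔ q ∈ Q ∧ ∀ l ∈ q.neg, l ∉ headSet G := by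
  simp only [reduct, Set.mem_setOf_eq, defeatsRule, Set.inter_nonempty, not_exists]
  constructor
  · rintro ⟨h1, h2⟩
    exact ⟨h1, fun l hl hlG => (h2 l) ⟨hlG, hl⟩⟩
  · rintro ⟨h1, h2⟩
    exact ⟨h1, fun l ⟨hlG, hl⟩ => h2 l hl hlG⟩

lemma mem_reduct_of_neg_empty {B : Type} {Q G : Set (Rule B)} {q : Rule B}
    (hq : q ∈ Q) (h : q.neg = ∅) : q ∈ reduct Q G :=
  mem_reduct_iff.2 ⟨hq, fun l hl => by rw [h] at hl; exact absurd hl (Set.notMem_empty l)⟩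


/-- The generating set used for direction 1. -/
def dir1Gen (lt : Rule A → Rule A → Prop) (P R : Set (Rule A)) : Set (Rule (TAtom A)) :=
  rule1 '' R ∪ rule2 '' R ∪ {q | ∃ r ∈ P, ∃ p ∈ Trules lt r R, q = rule3 p r}

lemma mem_dir1Gen {lt : Rule A → Rule A → Prop} {P R : Set (Rule A)} {q : Rule (TAtom A)} :
    q ∈ dir1Gen lt P R ↔ (∃ r ∈ R, rule1 r = q) ∨ (∃ r ∈ R, rule2 r = q) ∨
      (∃ r ∈ P, ∃ p ∈ Trules lt r R, q = rule3 p r) := by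
  simp [dir1Gen, Set.mem_union, Set.mem_image, or_assoc]

lemma gno_dir1 (lt : Rule A → Rule A → Prop) (P : Set (Rule A)) (S : Set (Lit A))
    (h : GNOPrefAnswerSet lt P S) :
    AnswerSet (transProg lt P) (embedLit '' S ∪ nameLits P S ∪ auxLits lt P S) := by
  obtain ⟨hcons, R, ⟨hgen, hgno⟩, hhead⟩ := h
  have hRP : R ⊆ P := hgen.1
  have hRGamma : R = Gamma S P := by
    have := genSet_eq_gamma hgen; rwa [hhead] at this
  set Q := transProg lt P with hQdef
  set A₀ := embedLit '' S ∪ nameLits P S ∪ auxLits lt P S with hA₀def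
  have hA₀mem : ∀ l : Lit (TAtom A), l ∈ A₀ ↔
      (∃ x ∈ S, embedLit x = l) ∨ (∃ r ∈ Gamma S P, nLit r = l) ∨
      (∃ r ∈ P, ∃ x ∈ headSet (Trules lt r (Gamma S P)), l = tagLit x r) := by
    intro l
    simp [hA₀def, nameLits, auxLits, Set.mem_union, Set.mem_image, or_assoc]
  have hA_embed : ∀ x : Lit A, embedLit x ∈ A₀ ↔ x ∈ S := by
    intro x
    rw [hA₀mem]
    constructor
    · rintro (⟨y, hy, hxy⟩ | ⟨r, hr, hxr⟩ | ⟨r, hr, y, hy, hxr⟩)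
      · rwa [← embedLit_inj hxy]
      · exact absurd hxr (by simp [embedLit, nLit, Prod.ext_iff])
      · exact absurd hxr (by simp [embedLit, tagLit, Prod.ext_iff])
    · intro hx; exact Or.inl ⟨x, hx, rfl⟩
  have hA_name : ∀ r : Rule A, nLit r ∈ A₀ ↔ r ∈ Gamma S P := by
    intro r
    rw [hA₀mem]
    constructor
    · rintro (⟨y, hy, hxy⟩ | ⟨r', hr', hxr⟩ | ⟨r', hr', y, hy, hxr⟩)
      · exact absurd hxy (by simp [embedLit, nLit, Prod.ext_iff])
      · rwa [← nLit_inj hxr]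
      · exact absurd hxr (by simp [nLit, tagLit, Prod.ext_iff])
    · intro hr; exact Or.inr (Or.inl ⟨r, hr, rfl⟩)
  have hA_tag : ∀ (x : Lit A) (r : Rule A), tagLit x r ∈ A₀ ↔
      (r ∈ P ∧ x ∈ headSet (Trules lt r R)) := by
    intro x r
    rw [hA₀mem]
    constructor
    · rintro (⟨y, hy, hxy⟩ | ⟨r', hr', hxr⟩ | ⟨r', hr', y, hy, hxr⟩)
      · exact absurd hxy (by simp [embedLit, tagLit, Prod.ext_iff])
      · exact absurd hxr (by simp [nLit, tagLit, Prod.ext_iff])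
      · obtain ⟨hxy, hrr⟩ := tagLit_inj hxr
        subst hxy; subst hrr
        rw [← hRGamma] at hy
        exact ⟨hr', hy⟩
    · rintro ⟨hrP, hx⟩
      rw [hRGamma] at hx
      exact Or.inr (Or.inr ⟨r, hrP, x, hx, rfl⟩)
  -- consistency
  have hconsA : Consistent A₀ := by
    rintro a ⟨ht, hf⟩
    rw [hA₀mem] at hf
    rcases hf with (⟨⟨y1, y2⟩, hy, hxy⟩ | ⟨r, hr, hxr⟩ | ⟨r, hr, y, hy, hxr⟩)
    · simp only [embedLit, Prod.ext_iff] at hxy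
      obtain ⟨hy1, hy2⟩ := hxy
      subst hy1
      cases hy2
      have h1 : (true, y2) ∈ S := (hA_embed (true, y2)).1 ht
      exact hcons y2 ⟨h1, hy⟩
    · exact absurd hxr (by simp [nLit, Prod.ext_iff])
    · exact absurd hxr (by simp [tagLit, Prod.ext_iff])
  set G := dir1Gen lt P R with hGdef
  -- headSet G = A₀
  have hheadG : headSet G = A₀ := by
    apply Set.Subset.antisymm
    · rintro l ⟨q, hq, rfl⟩
      rcases mem_dir1Gen.1 hq with (⟨r, hr, rfl⟩ | ⟨r, hr, rfl⟩ | ⟨r, hr, p, hp, rfl⟩)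
      · exact (hA_embed _).2 (hhead ▸ head_mem_headSet hr)
      · exact (hA_name _).2 (by rw [← hRGamma]; exact hr)
      · exact (hA_tag _ _).2 ⟨hr, head_mem_headSet hp⟩
    · intro l hl
      rcases (hA₀mem l).1 hl with (⟨x, hx, rfl⟩ | ⟨r, hr, rfl⟩ | ⟨r, hr, x, hx, rfl⟩)
      · rw [← hhead] at hx
        obtain ⟨p, hp, rfl⟩ := hx
        exact ⟨rule1 p, mem_dir1Gen.2 (Or.inl ⟨p, hp, rfl⟩), rfl⟩
      · rw [← hRGamma] at hr
        exact ⟨rule2 r, mem_dir1Gen.2 (Or.inr (Or.inl ⟨r, hr, rfl⟩)), rfl⟩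
      · rw [← hRGamma] at hx
        obtain ⟨p, hp, rfl⟩ := hx
        exact ⟨rule3 p r, mem_dir1Gen.2 (Or.inr (Or.inr ⟨r, hr, p, hp, rfl⟩)), rfl⟩
  have hTsub : ∀ r, Trules lt r R ⊆ {p ∈ R | ¬ lt p r} := fun r => MP_subset _
  have hGQ : G ⊆ Q := by
    intro q hq
    rcases mem_dir1Gen.1 hq with (⟨r, hr, rfl⟩ | ⟨r, hr, rfl⟩ | ⟨r, hr, p, hp, rfl⟩)
    · exact rule1_mem (hRP hr)
    · exact rule2_mem (hRP hr)
    · obtain ⟨hpR, hplt⟩ := hTsub r hp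
      exact rule3_mem hr (hRP hpR) hplt
  have hRred : R ⊆ reduct P R := fun r hr => MP_subset _ (hgen.2 ▸ hr)
  have hRgno : R ⊆ gnoReduct lt P R := fun r hr => MP_subset _ (hgno ▸ hr)
  have hno : ∀ r ∈ R, ¬ (r.neg ∩ headSet (Trules lt r R)).Nonempty :=
    fun r hr => (hRgno hr).2
  have hGD : G ⊆ reduct Q G := by
    intro q hq
    rcases mem_dir1Gen.1 hq with (⟨r, hr, rfl⟩ | ⟨r, hr, rfl⟩ | ⟨r, hr, p, hp, rfl⟩)
    · exact mem_reduct_of_neg_empty (hGQ hq) rfl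
    · refine mem_reduct_iff.2 ⟨hGQ hq, ?_⟩
      rintro l ⟨x, hx, rfl⟩ hl
      rw [hheadG] at hl
      obtain ⟨hrP', hxT⟩ := (hA_tag x r).1 hl
      exact hno r hr ⟨x, hx, hxT⟩
    · exact mem_reduct_of_neg_empty (hGQ hq) rfl
  -- G ⊆ MP (reduct Q G)
  have hX : ∀ r ∈ R, rule1 r ∈ MP (reduct Q G) ∧ rule2 r ∈ MP (reduct Q G) := by
    have hps : PosSat (reduct P R)
        {p ∈ R | rule1 p ∈ MP (reduct Q G) ∧ rule2 p ∈ MP (reduct Q G)} := by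
      constructor
      · exact fun p hp => hRred hp.1
      · intro p hpred hpos
        have hsub : p.pos ⊆ headSet R := hpos.trans (headSet_mono (Set.sep_subset _ _))
        have hpR : p ∈ R := by
          have : p ∈ MP (reduct P R) := MP_closed hpred (by rw [← hgen.2]; exact hsub)
          rwa [← hgen.2] at this
        have hr2 : rule2 p ∈ MP (reduct Q G) := by
          apply MP_closed (hGD (mem_dir1Gen.2 (Or.inr (Or.inl ⟨p, hpR, rfl⟩))))
          rintro l ⟨y, hy, rfl⟩
          obtain ⟨q', hq', hh⟩ := hpos hy
          exact ⟨rule1 q', hq'.2.1, congrArg embedLit hh⟩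
        have hr1 : rule1 p ∈ MP (reduct Q G) := by
          apply MP_closed (hGD (mem_dir1Gen.2 (Or.inl ⟨p, hpR, rfl⟩)))
          intro l hl
          have hl' : l = nLit p := hl
          subst hl'
          exact ⟨rule2 p, hr2, rfl⟩
        exact ⟨hpR, hr1, hr2⟩
    intro r hr
    exact (MP_le hps (hgen.2 ▸ hr)).2
  have hY : ∀ r ∈ P, ∀ p ∈ Trules lt r R, rule3 p r ∈ MP (reduct Q G) := by
    intro r hrP
    have hps : PosSat {p ∈ R | ¬ lt p r}
        {p ∈ {p ∈ R | ¬ lt p r} | rule3 p r ∈ MP (reduct Q G)} := by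
      refine ⟨Set.sep_subset _ _, ?_⟩
      intro p hp hpos
      have hr3 : rule3 p r ∈ MP (reduct Q G) := by
        apply MP_closed (mem_reduct_of_neg_empty (rule3_mem hrP (hRP hp.1) hp.2) rfl)
        intro l hl
        rcases hl with ⟨y, hy, rfl⟩ | hl
        · obtain ⟨q', hq', hh⟩ := hpos hy
          exact ⟨rule3 q' r, hq'.2, congrArg (fun z => tagLit z r) hh⟩
        · rw [Set.mem_singleton_iff] at hl
          subst hl
          exact ⟨rule2 p, (hX p hp.1).2, rfl⟩
      exact ⟨hp, hr3⟩
    intro p hp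
    exact (MP_le hps hp).2
  have hGMP : G ⊆ MP (reduct Q G) := by
    intro q hq
    rcases mem_dir1Gen.1 hq with (⟨r, hr, rfl⟩ | ⟨r, hr, rfl⟩ | ⟨r, hr, p, hp, rfl⟩)
    · exact (hX r hr).1
    · exact (hX r hr).2
    · exact hY r hr p hp
  have hMPG : MP (reduct Q G) ⊆ G := by
    apply MP_le
    refine ⟨hGD, ?_⟩
    intro q hqD hpos
    rw [hheadG] at hpos
    obtain ⟨r, hrP, hc⟩ := hqD.1
    rcases hc with rfl | rfl | ⟨p, hpP, hlt, rfl⟩ | ⟨x, hx, rfl⟩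
    · have hn : nLit r ∈ A₀ := hpos rfl
      have hrR : r ∈ R := by rw [hRGamma]; exact (hA_name r).1 hn
      exact mem_dir1Gen.2 (Or.inl ⟨r, hrR, rfl⟩)
    · have hposS : r.pos ⊆ S := by
        intro y hy
        exact (hA_embed y).1 (hpos ⟨y, hy, rfl⟩)
      have hgnor : r ∈ gnoReduct lt P R := by
        refine ⟨hrP, ?_⟩
        rintro ⟨x, hx1, hx2⟩
        have hxt : tagLit x r ∈ A₀ := (hA_tag x r).2 ⟨hrP, hx2⟩
        rw [← hheadG] at hxt
        exact (mem_reduct_iff.1 hqD).2 (tagLit x r) ⟨x, hx1, rfl⟩ hxt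
      have hrR : r ∈ R := by
        rw [hgno]
        apply MP_closed hgnor
        rw [← hgno, hhead]
        exact hposS
      exact mem_dir1Gen.2 (Or.inr (Or.inl ⟨r, hrR, rfl⟩))
    · have hpR : p ∈ R := by
        rw [hRGamma]
        exact (hA_name p).1 (hpos (Set.mem_union_right _ rfl))
      have hT : p ∈ Trules lt r R := by
        apply MP_closed (show p ∈ {p ∈ R | ¬ lt p r} from ⟨hpR, hlt⟩)
        intro y hy
        have hyt : tagLit y r ∈ A₀ := hpos (Set.mem_union_left _ ⟨y, hy, rfl⟩)
        exact ((hA_tag y r).1 hyt).2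
      exact mem_dir1Gen.2 (Or.inr (Or.inr ⟨r, hrP, p, hT, rfl⟩))
    · exfalso
      have hrR : r ∈ R := by
        rw [hRGamma]
        exact (hA_name r).1 (hpos (Set.mem_insert _ _))
      have hxS : x ∈ S := (hA_embed x).1 (hpos (Set.mem_insert_of_mem _ rfl))
      have hrG : r ∈ Gamma S P := by rw [← hRGamma]; exact hrR
      have hne := hrG.2.2
      rw [Set.eq_empty_iff_forall_notMem] at hne
      exact hne x ⟨hx, hxS⟩
  exact ⟨hconsA, G, ⟨hGQ, Set.Subset.antisymm hGMP hMPG⟩, hheadG⟩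


lemma gno_dir2 (lt : Rule A → Rule A → Prop) (P : Set (Rule A))
    (A' : Set (Lit (TAtom A))) (h : AnswerSet (transProg lt P) A') :
    GNOPrefAnswerSet lt P (embedLit ⁻¹' A') ∧
    A' = embedLit '' (embedLit ⁻¹' A') ∪ nameLits P (embedLit ⁻¹' A') ∪
      auxLits lt P (embedLit ⁻¹' A') := by
  obtain ⟨hcons, G, hgen, hheadG⟩ := h
  set Q := transProg lt P with hQdef
  have hGQ : G ⊆ Q := hgen.1
  have hGfix := hgen.2
  have hGD : G ⊆ reduct Q G := fun q hq => MP_subset _ (hGfix ▸ hq)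
  have hheadMP : headSet (MP (reduct Q G)) = A' := by rw [← hGfix]; exact hheadG
  set S := embedLit ⁻¹' A' with hSdef
  -- inc is never derived
  have hinc : incLit ∉ A' := by
    intro hl0
    rw [← hheadG] at hl0
    obtain ⟨q, hq, hh⟩ := hl0
    obtain ⟨r, hrP, x, hx, hq4⟩ := decode_inc (hGQ hq) hh
    have hn := (mem_reduct_iff.1 (hGD hq)).2 incLit (by rw [hq4]; exact rfl)
    exact hn ⟨q, hq, hh⟩
  have hf1 : ∀ r ∈ P, ∀ x ∈ r.neg, ¬ (nLit r ∈ A' ∧ embedLit x ∈ A') := by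
    rintro r hrP x hx ⟨h1, h2⟩
    have hq : rule4 r x ∈ reduct Q G := by
      refine mem_reduct_iff.2 ⟨rule4_mem hrP hx, ?_⟩
      intro l hl
      have hl' : l = incLit := hl
      subst hl'
      rw [hheadG]
      exact hinc
    have hq4G : rule4 r x ∈ G := by
      rw [hGfix]
      apply MP_closed hq
      intro l hl
      rcases hl with rfl | hl
      · rw [hheadMP]; exact h1
      · have hl' : l = embedLit x := hl
        subst hl'
        rw [hheadMP]; exact h2
    exact hinc (by rw [← hheadG]; exact ⟨rule4 r x, hq4G, rfl⟩)
  set R : Set (Rule A) := {r ∈ P | nLit r ∈ A'} with hRdef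
  have hmemR : ∀ r : Rule A, r ∈ R ↔ r ∈ P ∧ nLit r ∈ A' := fun r => Iff.rfl
  have hname : ∀ r : Rule A, nLit r ∈ A' ↔ (r ∈ P ∧ rule2 r ∈ G) := by
    intro r
    constructor
    · intro hl
      rw [← hheadG] at hl
      obtain ⟨q, hq, hh⟩ := hl
      obtain ⟨hrP, hq2⟩ := decode_name (hGQ hq) hh
      subst hq2
      exact ⟨hrP, hq⟩
    · rintro ⟨hrP, h2⟩
      rw [← hheadG]
      exact ⟨rule2 r, h2, rfl⟩
  have hr1G : ∀ r ∈ R, rule1 r ∈ G := by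
    intro r hr
    rw [hGfix]
    apply MP_closed (mem_reduct_of_neg_empty (rule1_mem hr.1) rfl)
    intro l hl
    have hl' : l = nLit r := hl
    subst hl'
    rw [hheadMP]
    exact hr.2
  have hheadRS : headSet R = S := by
    apply Set.Subset.antisymm
    · rintro x ⟨r, hr, rfl⟩
      show embedLit r.head ∈ A'
      rw [← hheadG]
      exact ⟨rule1 r, hr1G r hr, rfl⟩
    · intro x hx
      have hx' : embedLit x ∈ A' := hx
      rw [← hheadG] at hx'
      obtain ⟨q, hq, hh⟩ := hx'
      obtain ⟨r, hrP, hrh, hq1⟩ := decode_embed (hGQ hq) hh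
      subst hq1
      have hnr : nLit r ∈ A' := by
        rw [← hheadMP]
        have hq' : rule1 r ∈ MP (reduct Q G) := hGfix ▸ hq
        exact MP_pos hq' (show nLit r ∈ (rule1 r).pos from rfl)
      exact ⟨r, ⟨hrP, hnr⟩, hrh⟩
  have hposR : ∀ r ∈ R, r.pos ⊆ S := by
    intro r hr y hy
    have h2G : rule2 r ∈ G := ((hname r).1 hr.2).2
    have h2G' : rule2 r ∈ MP (reduct Q G) := hGfix ▸ h2G
    have := MP_pos h2G' (show embedLit y ∈ (rule2 r).pos from ⟨y, hy, rfl⟩)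
    rw [hheadMP] at this
    exact this
  have hnegR : ∀ r ∈ R, r.neg ∩ S = ∅ := by
    intro r hr
    rw [Set.eq_empty_iff_forall_notMem]
    rintro x ⟨hx1, hx2⟩
    exact hf1 r hr.1 x hx1 ⟨hr.2, hx2⟩
  -- rule3 rules with p ∈ Trules are in G
  have hrule3G : ∀ r ∈ P, ∀ p ∈ Trules lt r R, rule3 p r ∈ G := by
    intro r hrP
    have hps : PosSat {p ∈ R | ¬ lt p r} {p ∈ {p ∈ R | ¬ lt p r} | rule3 p r ∈ G} := by
      refine ⟨Set.sep_subset _ _, ?_⟩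
      intro p hp hpos
      have h3 : rule3 p r ∈ G := by
        rw [hGfix]
        apply MP_closed (mem_reduct_of_neg_empty (rule3_mem hrP hp.1.1 hp.2) rfl)
        intro l hl
        rcases hl with ⟨y, hy, rfl⟩ | hl
        · obtain ⟨q', hq', hh⟩ := hpos hy
          exact ⟨rule3 q' r, hGfix ▸ hq'.2, congrArg (fun z => tagLit z r) hh⟩
        · have hl' : l = nLit p := hl
          subst hl'
          rw [hheadMP]
          exact hp.1.2
      exact ⟨hp, h3⟩
    intro p hp
    exact (MP_le hps hp).2
  -- conversely: any rule3 in G has p ∈ Trules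
  have hZ : ∀ r : Rule A, ∀ q ∈ G, ∀ p, q = rule3 p r → p ∈ Trules lt r R := by
    intro r
    have hps : PosSat (reduct Q G)
        {q ∈ G | ∀ p, q = rule3 p r → p ∈ Trules lt r R} := by
      refine ⟨fun q hq => hGD hq.1, ?_⟩
      intro q hqD hpos
      have hq_pos_A : q.pos ⊆ A' := by
        intro l hl
        obtain ⟨q', hq', hh⟩ := hpos hl
        rw [← hheadG]
        exact ⟨q', hq'.1, hh⟩
      have hqG : q ∈ G := by
        rw [hGfix]
        exact MP_closed hqD (by rw [hheadMP]; exact hq_pos_A)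
      refine ⟨hqG, ?_⟩
      rintro p rfl
      obtain ⟨hrP, p₁, hp₁P, hlt₁, hh₁, heq⟩ :=
        decode_tag (hGQ hqG) (rfl : (rule3 p r).head = tagLit p.head r)
      obtain ⟨hpp, -⟩ := rule3_inj heq
      subst hpp
      have hpR : p ∈ R := by
        obtain ⟨q', hq', hh⟩ := hpos (Set.mem_union_right _ rfl)
        have hn : nLit p ∈ A' := by rw [← hheadG]; exact ⟨q', hq'.1, hh⟩
        exact ⟨hp₁P, hn⟩
      apply MP_closed (show p ∈ {p ∈ R | ¬ lt p r} from ⟨hpR, hlt₁⟩)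
      intro y hy
      obtain ⟨q', hq', hh⟩ := hpos (Set.mem_union_left _ ⟨y, hy, rfl⟩)
      obtain ⟨-, p₂, hp₂P, hlt₂, hh₂, heq₂⟩ := decode_tag (hGQ hq'.1) hh
      have hT₂ : p₂ ∈ Trules lt r R := hq'.2 p₂ heq₂
      exact ⟨p₂, hT₂, hh₂⟩
    intro q hq
    exact (MP_le hps (hGfix ▸ hq)).2
  have htagT : ∀ (x : Lit A) (r : Rule A),
      tagLit x r ∈ A' ↔ r ∈ P ∧ x ∈ headSet (Trules lt r R) := by
    intro x r
    constructor
    · intro hl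
      rw [← hheadG] at hl
      obtain ⟨q, hq, hh⟩ := hl
      obtain ⟨hrP, p, hpP, hlt, hph, heq⟩ := decode_tag (hGQ hq) hh
      exact ⟨hrP, ⟨p, hZ r q hq p heq, hph⟩⟩
    · rintro ⟨hrP, hx⟩
      obtain ⟨p, hp, rfl⟩ := hx
      rw [← hheadG]
      exact ⟨rule3 p r, hrule3G r hrP p hp, rfl⟩
  have hGaR : Gamma S P ⊆ R := by
    rintro r ⟨hrP, hposr, hnegr⟩
    have h2D : rule2 r ∈ reduct Q G := by
      refine mem_reduct_iff.2 ⟨rule2_mem hrP, ?_⟩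
      rintro l ⟨x, hx, rfl⟩ hl
      rw [hheadG] at hl
      obtain ⟨-, hxT⟩ := (htagT x r).1 hl
      obtain ⟨p, hpT, rfl⟩ := hxT
      have hpR : p ∈ R := (MP_subset _ hpT).1
      have hhS : p.head ∈ S := hheadRS ▸ head_mem_headSet hpR
      rw [Set.eq_empty_iff_forall_notMem] at hnegr
      exact hnegr p.head ⟨hx, hhS⟩
    have h2G : rule2 r ∈ G := by
      rw [hGfix]
      apply MP_closed h2D
      rw [hheadMP]
      rintro l ⟨y, hy, rfl⟩
      exact hposr hy
    exact ⟨hrP, (hname r).2 ⟨hrP, h2G⟩⟩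
  have hReqGa : R = Gamma S P :=
    Set.Subset.antisymm (fun r hr => ⟨hr.1, hposR r hr, hnegR r hr⟩) hGaR
  -- generic minimality transfer
  have hL : ∀ M : Set (Rule A),
      (∀ r ∈ P, rule2 r ∈ G → r.pos ⊆ headSet M → r ∈ M) →
      ∀ r, rule2 r ∈ G → r ∈ M := by
    intro M hM
    have hps : PosSat (reduct Q G)
        {q ∈ G | (∀ r, q = rule2 r → r ∈ M) ∧ (∀ r, q = rule1 r → r.head ∈ headSet M)} := by
      refine ⟨fun q hq => hGD hq.1, ?_⟩
      intro q hqD hpos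
      have hq_pos_A : q.pos ⊆ A' := by
        intro l hl
        obtain ⟨q', hq', hh⟩ := hpos hl
        rw [← hheadG]
        exact ⟨q', hq'.1, hh⟩
      have hqG : q ∈ G := by
        rw [hGfix]
        exact MP_closed hqD (by rw [hheadMP]; exact hq_pos_A)
      refine ⟨hqG, ?_, ?_⟩
      · rintro r rfl
        obtain ⟨hrP, -⟩ := decode_name (hGQ hqG) (rfl : (rule2 r).head = nLit r)
        have hrpos : r.pos ⊆ headSet M := by
          intro y hy
          obtain ⟨q', hq', hh⟩ := hpos ⟨y, hy, rfl⟩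
          obtain ⟨p, hpP, hph, heq⟩ := decode_embed (hGQ hq'.1) hh
          have := hq'.2.2 p heq
          rwa [hph] at this
        exact hM r hrP hqG hrpos
      · rintro r rfl
        obtain ⟨q', hq', hh⟩ := hpos (rfl : nLit r ∈ (rule1 r).pos)
        obtain ⟨hrP, heq⟩ := decode_name (hGQ hq'.1) hh
        exact head_mem_headSet (hq'.2.1 r heq)
    intro r h2G
    exact ((MP_le hps (hGfix ▸ h2G)).2).1 r rfl
  have hRred : R ⊆ reduct P R := by
    intro r hr
    refine ⟨hr.1, ?_⟩
    rintro ⟨x, hx1, hx2⟩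
    have hxS : x ∈ S := hheadRS ▸ hx1
    have hne := hnegR r hr
    rw [Set.eq_empty_iff_forall_notMem] at hne
    exact hne x ⟨hx2, hxS⟩
  have hgenPR : GenSet P R := by
    refine ⟨fun r hr => hr.1, Set.Subset.antisymm ?_ ?_⟩
    · intro r hr
      exact hL (MP (reduct P R))
        (fun p hpP h2G hpos => MP_closed (hRred ⟨hpP, (hname p).2 ⟨hpP, h2G⟩⟩) hpos)
        r ((hname r).1 hr.2).2
    · apply MP_le
      refine ⟨hRred, ?_⟩
      intro r hrred hpos
      have hposS : r.pos ⊆ S := by rw [← hheadRS]; exact hpos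
      have hnegS : r.neg ∩ S = ∅ := by
        rw [Set.eq_empty_iff_forall_notMem]
        rintro x ⟨hx1, hx2⟩
        exact hrred.2 ⟨x, (by rw [hheadRS]; exact hx2), hx1⟩
      exact hGaR ⟨hrred.1, hposS, hnegS⟩
  have hRgno : R ⊆ gnoReduct lt P R := by
    intro r hr
    refine ⟨hr.1, ?_⟩
    rintro ⟨x, hx1, hx2⟩
    have h2G : rule2 r ∈ G := ((hname r).1 hr.2).2
    have hnd := (mem_reduct_iff.1 (hGD h2G)).2 (tagLit x r) ⟨x, hx1, rfl⟩
    rw [hheadG] at hnd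
    exact hnd ((htagT x r).2 ⟨hr.1, hx2⟩)
  have hgnoR : R = MP (gnoReduct lt P R) := by
    apply Set.Subset.antisymm
    · intro r hr
      exact hL (MP (gnoReduct lt P R))
        (fun p hpP h2G hpos => MP_closed (hRgno ⟨hpP, (hname p).2 ⟨hpP, h2G⟩⟩) hpos)
        r ((hname r).1 hr.2).2
    · apply MP_le
      refine ⟨hRgno, ?_⟩
      intro r hrg hpos
      have h2D : rule2 r ∈ reduct Q G := by
        refine mem_reduct_iff.2 ⟨rule2_mem hrg.1, ?_⟩
        rintro l ⟨x, hx, rfl⟩ hl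
        rw [hheadG] at hl
        exact hrg.2 ⟨x, hx, ((htagT x r).1 hl).2⟩
      have h2G : rule2 r ∈ G := by
        rw [hGfix]
        apply MP_closed h2D
        rw [hheadMP]
        rintro l ⟨y, hy, rfl⟩
        exact (hheadRS ▸ hpos hy : y ∈ S)
      exact ⟨hrg.1, (hname r).2 ⟨hrg.1, h2G⟩⟩
  have hconsS : Consistent S := by
    rintro a ⟨h1, h2⟩
    exact hcons (TAtom.orig a) ⟨h1, h2⟩
  have hdecomp : A' = embedLit '' S ∪ nameLits P S ∪ auxLits lt P S := by
    apply Set.Subset.antisymm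
    · intro l hl
      rw [← hheadG] at hl
      obtain ⟨q, hq, rfl⟩ := hl
      obtain ⟨r, hrP, hc⟩ := hGQ hq
      rcases hc with rfl | rfl | ⟨p, hpP, hlt, rfl⟩ | ⟨x, hx, rfl⟩
      · have hh : embedLit r.head ∈ A' := by rw [← hheadG]; exact ⟨rule1 r, hq, rfl⟩
        exact Set.mem_union_left _ (Set.mem_union_left _ ⟨r.head, hh, rfl⟩)
      · have hn : nLit r ∈ A' := by rw [← hheadG]; exact ⟨rule2 r, hq, rfl⟩
        exact Set.mem_union_left _ (Set.mem_union_right _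
          ⟨r, (by rw [← hReqGa]; exact ⟨hrP, hn⟩), rfl⟩)
      · have ht : tagLit p.head r ∈ A' := by rw [← hheadG]; exact ⟨rule3 p r, hq, rfl⟩
        obtain ⟨-, hxT⟩ := (htagT p.head r).1 ht
        refine Set.mem_union_right _ ⟨r, hrP, p.head, ?_, rfl⟩
        rw [← hReqGa]; exact hxT
      · exact absurd (by rw [← hheadG]; exact ⟨rule4 r x, hq, rfl⟩) hinc
    · intro l hl
      rcases hl with ((⟨x, hx, rfl⟩ | ⟨r, hr, rfl⟩) | ⟨r, hrP, x, hx, rfl⟩)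
      · exact hx
      · rw [← hReqGa] at hr
        exact hr.2
      · rw [← hReqGa] at hx
        exact (htagT x r).2 ⟨hrP, hx⟩
  exact ⟨⟨hconsS, R, ⟨hgenPR, hgnoR⟩, hheadRS⟩, hdecomp⟩

end GnoHelpers

/-- the transformation `t` captures semantics GNO: GNO-preferred
answer sets of `(P,<)` correspond exactly (modulo the new literals) to answer
sets of `t(P,<)`. -/
theorem trans_captures_gno (P : Set (Rule A)) (hP : P.Finite)
    (lt : Rule A → Rule A → Prop) (htrans : Transitive lt)
    (hasymm : ∀ r₁ r₂, lt r₁ r₂ → ¬ lt r₂ r₁) :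
    (∀ S : Set (Lit A), GNOPrefAnswerSet lt P S →
      AnswerSet (transProg lt P) (embedLit '' S ∪ nameLits P S ∪ auxLits lt P S)) ∧
    (∀ A' : Set (Lit (TAtom A)), AnswerSet (transProg lt P) A' →
      GNOPrefAnswerSet lt P (embedLit ⁻¹' A') ∧
      A' = embedLit '' (embedLit ⁻¹' A') ∪ nameLits P (embedLit ⁻¹' A') ∪
        auxLits lt P (embedLit ⁻¹' A')) :=
  ⟨fun S h => gno_dir1 lt P S h, fun A' h => gno_dir2 lt P A' h⟩
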